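/- For every γ ∈ ℤ, n ∈ ℚ_p, j ∈ {1,…,p−1} and m ∈ {0,…,p−1}, one has the identity of functions G(p^{-γ} j^{-1}, p^{-γ}(n − m·j^{-1}))ψ = χ(m·p^{-1})·ψ_{γ n j}, where j and m are regarded as elements of ℚ_p. -/

import Mathlib

open MeasureTheory

/-- Action of the `p`-adic affine group on complex-valued functions:
`(G(a,b)f)(x) = |a|_p^{-1/2} f((x-b)/a)`. -/
noncomputable def Gact (p : ℕ) [Fact p.Prime] (a b : ℚ_[p]) (f : ℚ_[p] → ℂ) : ℚ_[p] → ℂ :=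
  fun x => ((‖a‖ ^ (-(1/2) : ℝ) : ℝ) : ℂ) * f ((x - b) / a)

/-- `Ω(|x|_p)`: the indicator function of the unit ball `ℤ_p`. -/
noncomputable def Omega (p : ℕ) [Fact p.Prime] : ℚ_[p] → ℂ :=
  fun x => if ‖x‖ ≤ 1 then 1 else 0

/-- `R_σ`: the set of finite sums `∑_{l=-δ}^{σ-1} n_l p^l` with digits `n_l ∈ {0,…,p-1}`,
a complete set of representatives of `ℚ_p / p^σ ℤ_p`. -/
def Rset (p : ℕ) [Fact p.Prime] (σ : ℤ) : Set ℚ_[p] :=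
  { x | ∃ (δ : ℕ) (d : ℤ → ℕ), (∀ l, d l < p) ∧
      x = ∑ l ∈ Finset.Icc (-(δ : ℤ)) (σ - 1), (d l : ℚ_[p]) * (p : ℚ_[p]) ^ l }

/-- The `p`-adic wavelet `ψ_{γ n j}(x) = p^{-γ/2} χ(p⁻¹ j (p^γ x - n)) Ω(|p^γ x - n|_p)`. -/
noncomputable def wavelet (p : ℕ) [Fact p.Prime] (χ : ℚ_[p] → ℂ) (γ : ℤ) (n : ℚ_[p]) (j : ℕ) :
    ℚ_[p] → ℂ :=
  fun x => (((p : ℝ) ^ (-(γ : ℝ) / 2) : ℝ) : ℂ) *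
    χ ((p : ℚ_[p])⁻¹ * (j : ℚ_[p]) * ((p : ℚ_[p]) ^ γ * x - n)) *
    Omega p ((p : ℚ_[p]) ^ γ * x - n)

/-- The basic `p`-adic wavelet `ψ(x) = χ(p⁻¹ x) Ω(|x|_p)`. -/
noncomputable def psiw (p : ℕ) [Fact p.Prime] (χ : ℚ_[p] → ℂ) : ℚ_[p] → ℂ :=
  fun x => χ ((p : ℚ_[p])⁻¹ * x) * Omega p x

theorem stmt_3 (p : ℕ) [Fact p.Prime] (χ : ℚ_[p] → ℂ)
    (hχ_add : ∀ x y : ℚ_[p], χ (x + y) = χ x * χ y)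
    (hχ_norm : ∀ x : ℚ_[p], ‖χ x‖ = 1)
    (hχ_triv : ∀ x : ℚ_[p], ‖x‖ ≤ 1 → χ x = 1)
    (hχ_nontriv : χ ((p : ℚ_[p])⁻¹) ≠ 1)
    (γ : ℤ) (n : ℚ_[p]) (j m : ℕ) (hj : 1 ≤ j ∧ j ≤ p - 1) (hm : m ≤ p - 1) :
    Gact p ((p : ℚ_[p]) ^ (-γ) * (j : ℚ_[p])⁻¹)
        ((p : ℚ_[p]) ^ (-γ) * (n - (m : ℚ_[p]) * (j : ℚ_[p])⁻¹)) (psiw p χ) =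
      fun x => χ ((m : ℚ_[p]) * (p : ℚ_[p])⁻¹) * wavelet p χ γ n j x := by
  obtain ⟨hj1, hj2⟩ := hj
  have hp : p.Prime := Fact.out
  have hp2 := hp.two_le
  have hpR : (0:ℝ) < p := by positivity
  have hp0 : (p : ℚ_[p]) ≠ 0 := Nat.cast_ne_zero.mpr hp.ne_zero
  have hpz : (p : ℚ_[p]) ^ γ ≠ 0 := zpow_ne_zero _ hp0
  have hj0 : (j : ℚ_[p]) ≠ 0 := Nat.cast_ne_zero.mpr (by omega)
  have hjn : ‖(j : ℚ_[p])‖ = 1 := by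
    have h1 : ‖((j : ℤ) : ℚ_[p])‖ ≤ 1 := Padic.norm_int_le_one _
    have h2 : ¬ ‖((j : ℤ) : ℚ_[p])‖ < 1 := by
      rw [Padic.norm_intCast_lt_one_iff]
      intro h
      have : p ∣ j := by exact_mod_cast h
      have := Nat.le_of_dvd (by omega) this
      omega
    push_cast at h1 h2
    exact le_antisymm h1 (not_lt.mp h2)
  have hmn : ‖(m : ℚ_[p])‖ ≤ 1 := by
    have := Padic.norm_int_le_one (p := p) (m : ℤ)
    push_cast at this
    exact this
  funext x
  show ((‖(p : ℚ_[p]) ^ (-γ) * (j : ℚ_[p])⁻¹‖ ^ (-(1/2) : ℝ) : ℝ) : ℂ) *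
      psiw p χ ((x - (p : ℚ_[p]) ^ (-γ) * (n - (m : ℚ_[p]) * (j : ℚ_[p])⁻¹)) /
        ((p : ℚ_[p]) ^ (-γ) * (j : ℚ_[p])⁻¹)) = _
  have hnorm : ‖(p : ℚ_[p]) ^ (-γ) * (j : ℚ_[p])⁻¹‖ ^ (-(1/2) : ℝ)
      = (p : ℝ) ^ (-(γ : ℝ) / 2) := by
    rw [norm_mul, norm_inv, hjn, inv_one, mul_one, Padic.norm_p_zpow, neg_neg,
      ← Real.rpow_intCast (p : ℝ) γ, ← Real.rpow_mul hpR.le]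
    congr 1
    ring
  have harg : (x - (p : ℚ_[p]) ^ (-γ) * (n - (m : ℚ_[p]) * (j : ℚ_[p])⁻¹)) /
      ((p : ℚ_[p]) ^ (-γ) * (j : ℚ_[p])⁻¹)
      = (j : ℚ_[p]) * ((p : ℚ_[p]) ^ γ * x - n) + m := by
    rw [zpow_neg]
    field_simp
    ring
  set u : ℚ_[p] := (p : ℚ_[p]) ^ γ * x - n with hu
  have hiff : ‖(j : ℚ_[p]) * u + m‖ ≤ 1 ↔ ‖u‖ ≤ 1 := by
    constructor
    · intro h
      have hrw : u = (j : ℚ_[p])⁻¹ * (((j : ℚ_[p]) * u + m) + -(m : ℚ_[p])) := by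
        field_simp
        ring
      rw [hrw, norm_mul, norm_inv, hjn, inv_one, one_mul]
      calc ‖((j : ℚ_[p]) * u + m) + -(m : ℚ_[p])‖
          ≤ max ‖(j : ℚ_[p]) * u + m‖ ‖-(m : ℚ_[p])‖ := Padic.nonarchimedean _ _
        _ ≤ 1 := by rw [norm_neg]; exact max_le h hmn
    · intro h
      calc ‖(j : ℚ_[p]) * u + m‖ ≤ max ‖(j : ℚ_[p]) * u‖ ‖(m : ℚ_[p])‖ :=
            Padic.nonarchimedean _ _
        _ ≤ 1 := by
            apply max_le _ hmn
            rw [norm_mul, hjn, one_mul]; exact h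
  have hχ : χ ((p : ℚ_[p])⁻¹ * ((j : ℚ_[p]) * u + m))
      = χ ((p : ℚ_[p])⁻¹ * (j : ℚ_[p]) * u) * χ ((m : ℚ_[p]) * (p : ℚ_[p])⁻¹) := by
    rw [show (p : ℚ_[p])⁻¹ * ((j : ℚ_[p]) * u + m)
        = (p : ℚ_[p])⁻¹ * (j : ℚ_[p]) * u + (m : ℚ_[p]) * (p : ℚ_[p])⁻¹ by ring,
      hχ_add]
  rw [harg]
  simp only [psiw, wavelet, Omega, hnorm, hχ]
  by_cases hcase : ‖u‖ ≤ 1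
  · rw [if_pos hcase, if_pos (hiff.mpr hcase)]
    simp only [hu]
    ring
  · rw [if_neg hcase, if_neg (fun h => hcase (hiff.mp h))]
    ring
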